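/- (a) Let f, g, h : ℝ → ℂ be continuous and let α, β, γ : ℝ → ℂ be differentiable with α' = h·β − g·γ, β' = −h·α + f·γ, γ' = g·α − f·β. Then the function α² + β² + γ² has derivative identically zero. (b) Let w be differentiable and nonvanishing, p = w'/w, q continuous, and let (z₁, z₂, z₃) : ℝ → ℂ³ be differentiable with z₁' = z₂, z₂' = −2q·z₁ − p·z₂ + 2z₃, z₃' = −q·z₂ − 2p·z₃. Then the function w²·(4·z₁·z₃ − z₂²) has derivative identically zero. -/

import Mathlib

/-- Corollary (propso0): first integrals of the orthogonal system and of the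
second symmetric power system. -/
theorem first_integrals_orthogonal_and_sym2 :
    (∀ f g h α β γ : ℝ → ℂ,
      Continuous f → Continuous g → Continuous h →
      Differentiable ℝ α → Differentiable ℝ β → Differentiable ℝ γ →
      (∀ x, deriv α x = h x * β x - g x * γ x) →
      (∀ x, deriv β x = -(h x) * α x + f x * γ x) →
      (∀ x, deriv γ x = g x * α x - f x * β x) →
      ∀ x, deriv (fun t => α t ^ 2 + β t ^ 2 + γ t ^ 2) x = 0) ∧
    (∀ w p q z₁ z₂ z₃ : ℝ → ℂ,
      Differentiable ℝ w → (∀ x, w x ≠ 0) → (∀ x, p x = deriv w x / w x) →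
      Continuous q →
      Differentiable ℝ z₁ → Differentiable ℝ z₂ → Differentiable ℝ z₃ →
      (∀ x, deriv z₁ x = z₂ x) →
      (∀ x, deriv z₂ x = -2 * q x * z₁ x - p x * z₂ x + 2 * z₃ x) →
      (∀ x, deriv z₃ x = -(q x) * z₂ x - 2 * p x * z₃ x) →
      ∀ x, deriv (fun t => w t ^ 2 * (4 * z₁ t * z₃ t - z₂ t ^ 2)) x = 0) := by
  constructor
  · intro f g h α β γ _ _ _ hα hβ hγ hα' hβ' hγ' x
    have dαsq : HasDerivAt (fun t => α t ^ 2) (deriv α x * α x + α x * deriv α x) x := by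
      simpa [pow_two] using (hα x).hasDerivAt.fun_mul (hα x).hasDerivAt
    have dβsq : HasDerivAt (fun t => β t ^ 2) (deriv β x * β x + β x * deriv β x) x := by
      simpa [pow_two] using (hβ x).hasDerivAt.fun_mul (hβ x).hasDerivAt
    have dγsq : HasDerivAt (fun t => γ t ^ 2) (deriv γ x * γ x + γ x * deriv γ x) x := by
      simpa [pow_two] using (hγ x).hasDerivAt.fun_mul (hγ x).hasDerivAt
    have hd := ((dαsq.fun_add dβsq).fun_add dγsq).deriv
    rw [hd, hα' x, hβ' x, hγ' x]
    ring
  · intro w p q z₁ z₂ z₃ hw hw0 hp _ h1 h2 h3 h1' h2' h3' x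
    have hwx : deriv w x = p x * w x := by
      rw [hp x, div_mul_cancel₀ _ (hw0 x)]
    have d1 : HasDerivAt (fun t => (4:ℂ) * z₁ t) (4 * deriv z₁ x) x :=
      ((h1 x).hasDerivAt.const_mul 4).congr_deriv (by ring)
    have d13 : HasDerivAt (fun t => 4 * z₁ t * z₃ t)
        (4 * deriv z₁ x * z₃ x + 4 * z₁ x * deriv z₃ x) x := d1.mul (h3 x).hasDerivAt
    have d2 : HasDerivAt (fun t => z₂ t ^ 2) (deriv z₂ x * z₂ x + z₂ x * deriv z₂ x) x := by
      simpa [pow_two] using (h2 x).hasDerivAt.fun_mul (h2 x).hasDerivAt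
    have dA := d13.fun_sub d2
    have dw : HasDerivAt (fun t => w t ^ 2) (deriv w x * w x + w x * deriv w x) x := by
      simpa [pow_two] using (hw x).hasDerivAt.fun_mul (hw x).hasDerivAt
    have hd := (dw.fun_mul dA).deriv
    rw [hd, hwx, h1' x, h2' x, h3' x]
    ring
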